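/- Let h = f + ψ where f : ℝ^d → ℝ is convex and differentiable with L-Lipschitz gradient and ψ : ℝ^d → ℝ ∪ {+∞} is proper convex lsc. Fix α ∈ (0, 1/L], x_k ∈ ℝ^d, a vector g_k ∈ ℝ^d, and let x_{k+1} = prox_{αψ}(x_k − α g_k). Then for any minimizer x* of h: ‖x_{k+1} − x*‖₂² ≤ ‖x_k − x*‖₂² − 2α(h(x_{k+1}) − h(x*)) + 2α⟨g_k − ∇f(x_k), x* − x_{k+1}⟩. -/

import Mathlib

open InnerProductSpace

variable {d : ℕ}

/-- `m` is the proximal point `prox_{αψ}(w)`. -/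
def IsProx (ψ : EuclideanSpace ℝ (Fin d) → EReal) (α : ℝ)
    (w m : EuclideanSpace ℝ (Fin d)) : Prop :=
  ∀ y, (((1 / 2) * ‖w - m‖ ^ 2 : ℝ) : EReal) + (α : EReal) * ψ m ≤
    (((1 / 2) * ‖w - y‖ ^ 2 : ℝ) : EReal) + (α : EReal) * ψ y

/-- Convexity for an `EReal`-valued function. -/
def ERealConvexOn (ψ : EuclideanSpace ℝ (Fin d) → EReal) : Prop :=
  ∀ x y : EuclideanSpace ℝ (Fin d), ∀ t : ℝ, 0 ≤ t → t ≤ 1 →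
    ψ (t • x + (1 - t) • y) ≤ (t : EReal) * ψ x + ((1 - t : ℝ) : EReal) * ψ y

/-- If `A ≤ B + t*C` for all `t ∈ (0,1]`, then `A ≤ B`. -/
lemma aux_limit14 {A B C : ℝ} (h : ∀ t : ℝ, 0 < t → t ≤ 1 → A ≤ B + t * C) : A ≤ B := by
  by_contra hc
  push_neg at hc
  have hC : 0 < C := by
    by_contra hC'
    push_neg at hC'
    have := h 1 one_pos le_rfl
    nlinarith
  set t := min 1 ((A - B) / (2 * C)) with ht
  have ht0 : 0 < t := lt_min one_pos (div_pos (by linarith) (by linarith))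
  have h1 := h t ht0 (min_le_left _ _)
  have h2 : t ≤ (A - B) / (2 * C) := min_le_right _ _
  have h3 : t * C ≤ (A - B) / 2 := by
    have := mul_le_mul_of_nonneg_right h2 hC.le
    calc t * C ≤ (A - B) / (2 * C) * C := this
      _ = (A - B) / 2 := by field_simp
  nlinarith

/-- Derivative of `f` along a line. -/
lemma hasDerivAt_line14 (f : EuclideanSpace ℝ (Fin d) → ℝ)
    (f' : EuclideanSpace ℝ (Fin d) → EuclideanSpace ℝ (Fin d))
    (hdiff : ∀ x, HasGradientAt f (f' x) x)
    (x v : EuclideanSpace ℝ (Fin d)) (t : ℝ) :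
    HasDerivAt (fun s : ℝ => f (x + s • v)) (inner ℝ (f' (x + t • v)) v : ℝ) t := by
  have h1 : HasDerivAt (fun s : ℝ => x + s • v) v t := by
    simpa using ((hasDerivAt_id t).smul_const v).const_add x
  have h2 : HasFDerivAt f (toDual ℝ _ (f' (x + t • v))) (x + t • v) :=
    hasGradientAt_iff_hasFDerivAt.1 (hdiff _)
  have := h2.comp_hasDerivAt t h1
  simp at this
  exact this

/-- Descent lemma. -/
lemma descent14 (f : EuclideanSpace ℝ (Fin d) → ℝ)
    (f' : EuclideanSpace ℝ (Fin d) → EuclideanSpace ℝ (Fin d))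
    (hdiff : ∀ x, HasGradientAt f (f' x) x)
    (L : ℝ) (hL : 0 < L)
    (hlip : ∀ x y, ‖f' x - f' y‖ ≤ L * ‖x - y‖)
    (x y : EuclideanSpace ℝ (Fin d)) :
    f y ≤ f x + (inner ℝ (f' x) (y - x) : ℝ) + L / 2 * ‖y - x‖ ^ 2 := by
  set v := y - x with hv
  set φ : ℝ → ℝ := fun t =>
    f (x + t • v) - t * (inner ℝ (f' x) v : ℝ) - L / 2 * t ^ 2 * ‖v‖ ^ 2 with hφ
  have hder : ∀ t : ℝ, HasDerivAt φ
      ((inner ℝ (f' (x + t • v)) v : ℝ) - (inner ℝ (f' x) v : ℝ) - L * t * ‖v‖ ^ 2) t := by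
    intro t
    have h1 := hasDerivAt_line14 f f' hdiff x v t
    have h2 : HasDerivAt (fun s : ℝ => s * (inner ℝ (f' x) v : ℝ) + L / 2 * s ^ 2 * ‖v‖ ^ 2)
        ((inner ℝ (f' x) v : ℝ) + L * t * ‖v‖ ^ 2) t := by
      have ha : HasDerivAt (fun s : ℝ => s * (inner ℝ (f' x) v : ℝ)) (inner ℝ (f' x) v : ℝ) t := by
        simpa using (hasDerivAt_id t).mul_const (inner ℝ (f' x) v : ℝ)
      have hb : HasDerivAt (fun s : ℝ => L / 2 * s ^ 2 * ‖v‖ ^ 2)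
          (L * t * ‖v‖ ^ 2) t := by
        have := ((hasDerivAt_pow 2 t).const_mul (L / 2)).mul_const (‖v‖ ^ 2)
        exact this.congr_deriv (by ring)
      exact ha.add hb
    have := h1.sub h2
    have hfun : φ = (fun s : ℝ => f (x + s • v)) -
        (fun s : ℝ => s * (inner ℝ (f' x) v : ℝ) + L / 2 * s ^ 2 * ‖v‖ ^ 2) := by
      funext s; simp [φ]; ring
    rw [hfun]
    refine this.congr_deriv ?_
    ring
  have hanti : AntitoneOn φ (Set.Icc (0 : ℝ) 1) := by
    apply antitoneOn_of_hasDerivWithinAt_nonpos (convex_Icc 0 1)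
      (fun t _ => (hder t).continuousAt.continuousWithinAt)
      (fun t _ => (hder t).hasDerivWithinAt)
    intro t ht
    rw [interior_Icc] at ht
    have hinner : (inner ℝ (f' (x + t • v)) v : ℝ) - (inner ℝ (f' x) v : ℝ)
        = (inner ℝ (f' (x + t • v) - f' x) v : ℝ) := by rw [inner_sub_left]
    have hb : (inner ℝ (f' (x + t • v) - f' x) v : ℝ) ≤ ‖f' (x + t • v) - f' x‖ * ‖v‖ :=
      real_inner_le_norm _ _
    have hc : ‖f' (x + t • v) - f' x‖ ≤ L * ‖t • v‖ := by
      simpa using hlip (x + t • v) x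
    have hd : ‖t • v‖ = t * ‖v‖ := by
      rw [norm_smul, Real.norm_eq_abs, abs_of_pos ht.1]
    rw [hd] at hc
    have h5 := mul_le_mul_of_nonneg_right hc (norm_nonneg v)
    rw [sub_nonpos] at *
    nlinarith [hb, h5, hinner, norm_nonneg v]
  have := hanti (Set.mem_Icc.2 ⟨le_refl 0, zero_le_one⟩) (Set.mem_Icc.2 ⟨zero_le_one, le_refl 1⟩)
    zero_le_one
  simp only [φ, one_smul, zero_smul, add_zero, zero_mul, one_mul, one_pow] at this
  have hy : x + v = y := by rw [hv]; abel
  rw [hy] at this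
  nlinarith [this]

/-- First-order condition for a convex differentiable function. -/
lemma convex_lb14 (f : EuclideanSpace ℝ (Fin d) → ℝ)
    (f' : EuclideanSpace ℝ (Fin d) → EuclideanSpace ℝ (Fin d))
    (hfconv : ConvexOn ℝ Set.univ f)
    (hdiff : ∀ x, HasGradientAt f (f' x) x)
    (x y : EuclideanSpace ℝ (Fin d)) :
    f x + (inner ℝ (f' x) (y - x) : ℝ) ≤ f y := by
  set φ : ℝ → ℝ := fun t => f (x + t • (y - x)) with hφ
  have hconv : ConvexOn ℝ Set.univ φ := by
    have := hfconv.comp_affineMap (AffineMap.lineMap x y : ℝ →ᵃ[ℝ] EuclideanSpace ℝ (Fin d))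
    have heq : φ = f ∘ (AffineMap.lineMap x y : ℝ →ᵃ[ℝ] EuclideanSpace ℝ (Fin d)) := by
      funext t
      simp [φ, AffineMap.lineMap_apply]
      congr 1
      abel
    rw [heq]
    simpa using this
  have hd : HasDerivAt φ (inner ℝ (f' x) (y - x) : ℝ) 0 := by
    have := hasDerivAt_line14 f f' hdiff x (y - x) 0
    simpa using this
  have hs := hconv.le_slope_of_hasDerivAt (Set.mem_univ (0 : ℝ)) (Set.mem_univ (1 : ℝ))
    zero_lt_one hd
  have hφ0 : φ 0 = f x := by simp [φ]
  have hφ1 : φ 1 = f y := by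
    simp only [φ, one_smul]
    congr 1
    abel
  rw [slope_def_field, hφ0, hφ1] at hs
  rw [show (1 : ℝ) - 0 = 1 by norm_num, div_one] at hs
  linarith

set_option maxHeartbeats 1000000 in
/-- One-step progress bound of an inexact proximal gradient step towards a
minimizer `x*` of `h = f + ψ`:
`‖x_{k+1}−x*‖² ≤ ‖x_k−x*‖² − 2α(h(x_{k+1})−h(x*)) + 2α⟨g_k−∇f(x_k), x*−x_{k+1}⟩`,
stated in `EReal` with the `h`-terms moved to each side. -/
theorem stmt14 (ψ : EuclideanSpace ℝ (Fin d) → EReal)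
    (hproper : (∀ x, ψ x ≠ ⊥) ∧ ∃ x, ψ x ≠ ⊤)
    (hψconv : ERealConvexOn ψ)
    (hψlsc : LowerSemicontinuous ψ)
    (f : EuclideanSpace ℝ (Fin d) → ℝ)
    (f' : EuclideanSpace ℝ (Fin d) → EuclideanSpace ℝ (Fin d))
    (L : ℝ) (hL : 0 < L)
    (hfconv : ConvexOn ℝ Set.univ f)
    (hdiff : ∀ x, HasGradientAt f (f' x) x)
    (hlip : ∀ x y, ‖f' x - f' y‖ ≤ L * ‖x - y‖)
    (α : ℝ) (hα : 0 < α) (hα1 : α ≤ 1 / L)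
    (xk gk xk1 : EuclideanSpace ℝ (Fin d))
    (hstep : IsProx ψ α (xk - α • gk) xk1)
    (xstar : EuclideanSpace ℝ (Fin d))
    (hmin : ∀ z, ((f xstar : ℝ) : EReal) + ψ xstar ≤ ((f z : ℝ) : EReal) + ψ z) :
    ((‖xk1 - xstar‖ ^ 2 : ℝ) : EReal) +
        ((2 * α : ℝ) : EReal) * (((f xk1 : ℝ) : EReal) + ψ xk1) ≤
      ((‖xk - xstar‖ ^ 2 + 2 * α * (inner ℝ (gk - f' xk) (xstar - xk1) : ℝ) : ℝ) : EReal) +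
        ((2 * α : ℝ) : EReal) * (((f xstar : ℝ) : EReal) + ψ xstar) := by
  obtain ⟨hbot, z, hz⟩ := hproper
  -- ψ xk1 is finite
  have hk1top : ψ xk1 ≠ ⊤ := by
    intro htop
    have h := hstep z
    rw [htop] at h
    rw [show ((α : ℝ) : EReal) * ⊤ = ⊤ from EReal.coe_mul_top_of_pos hα,
      EReal.coe_add_top] at h
    have hzr : ψ z = ((ψ z).toReal : ℝ) := (EReal.coe_toReal hz (hbot z)).symm
    rw [hzr, ← EReal.coe_mul, ← EReal.coe_add] at h
    exact (EReal.coe_ne_top _) (top_le_iff.1 h)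
  by_cases hstop : ψ xstar = ⊤
  · -- RHS is ⊤
    rw [hstop, EReal.coe_add_top, show ((2 * α : ℝ) : EReal) * ⊤ = ⊤ from
      EReal.coe_mul_top_of_pos (by positivity), EReal.coe_add_top]
    exact le_top
  -- Both finite: reduce to a real inequality
  set p1 := (ψ xk1).toReal with hp1def
  set ps := (ψ xstar).toReal with hpsdef
  have hp1 : ψ xk1 = ((p1 : ℝ) : EReal) := (EReal.coe_toReal hk1top (hbot xk1)).symm
  have hps : ψ xstar = ((ps : ℝ) : EReal) := (EReal.coe_toReal hstop (hbot xstar)).symm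
  rw [hp1, hps]
  rw [← EReal.coe_add, ← EReal.coe_add, ← EReal.coe_mul, ← EReal.coe_mul,
    ← EReal.coe_add, ← EReal.coe_add]
  rw [EReal.coe_le_coe_iff]
  -- Set up abbreviations
  set w := xk - α • gk with hw
  set s := xstar - xk1 with hs
  -- Prox subgradient inequality: α*(p1 - ps) + ⟪w - xk1, s⟫ ≤ 0
  have hsub : α * (p1 - ps) + (inner ℝ (w - xk1) s : ℝ) ≤ 0 := by
    have key : ∀ t : ℝ, 0 < t → t ≤ 1 →
        α * (p1 - ps) + (inner ℝ (w - xk1) s : ℝ) ≤ 0 + t * (‖s‖ ^ 2 / 2) := by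
      intro t ht0 ht1
      set yt := t • xstar + (1 - t) • xk1 with hyt
      have hconv := hψconv xstar xk1 t ht0.le ht1
      rw [hp1, hps, ← EReal.coe_mul, ← EReal.coe_mul, ← EReal.coe_add] at hconv
      have hpx := hstep yt
      have hmul : ((α : ℝ) : EReal) * ψ yt ≤
          ((α * (t * ps + (1 - t) * p1) : ℝ) : EReal) := by
        calc ((α : ℝ) : EReal) * ψ yt
            ≤ ((α : ℝ) : EReal) * (((t * ps + (1 - t) * p1 : ℝ)) : EReal) :=
              mul_le_mul_of_nonneg_left hconv (by exact_mod_cast hα.le)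
          _ = _ := by rw [← EReal.coe_mul]
      rw [hp1, ← EReal.coe_mul, ← EReal.coe_add] at hpx
      have htotal := le_trans hpx (add_le_add_right hmul _)
      rw [← EReal.coe_add, EReal.coe_le_coe_iff] at htotal
      -- expand ‖w - yt‖²
      have hyt2 : w - yt = (w - xk1) - t • s := by
        simp only [hyt, hs]
        rw [sub_smul, smul_sub, one_smul]
        abel
      have hnorm : ‖w - yt‖ ^ 2 = ‖w - xk1‖ ^ 2 - 2 * (t * (inner ℝ (w - xk1) s : ℝ))
          + t ^ 2 * ‖s‖ ^ 2 := by
        rw [hyt2, @norm_sub_sq_real, real_inner_smul_right, norm_smul, Real.norm_eq_abs,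
          abs_of_pos ht0, mul_pow]
      rw [hnorm] at htotal
      nlinarith [htotal, ht0]
    exact aux_limit14 key
  -- Descent lemma and convexity
  have hdesc := descent14 f f' hdiff L hL hlip xk xk1
  have hconvf := convex_lb14 f f' hfconv hdiff xk xstar
  -- vector identities
  set c := (inner ℝ (xk1 - xk) (xk1 - xstar) : ℝ) with hc
  have e1 : ‖xk - xstar‖ ^ 2 = ‖xk1 - xstar‖ ^ 2 - 2 * c + ‖xk1 - xk‖ ^ 2 := by
    have hid : xk - xstar = (xk1 - xstar) - (xk1 - xk) := by abel
    rw [hid, @norm_sub_sq_real, hc, real_inner_comm]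
  have e2 : (inner ℝ (w - xk1) s : ℝ) = c - α * (inner ℝ gk s : ℝ) := by
    have hid : w - xk1 = (xk - xk1) - α • gk := by rw [hw]; abel
    rw [hid, inner_sub_left, real_inner_smul_left, hc, hs]
    have : (inner ℝ (xk - xk1) (xstar - xk1) : ℝ) = inner ℝ (xk1 - xk) (xk1 - xstar) := by
      rw [show xk - xk1 = -(xk1 - xk) by abel, show xstar - xk1 = -(xk1 - xstar) by abel,
        inner_neg_neg]
    rw [this]
  have e3 : (inner ℝ (f' xk) (xstar - xk) : ℝ) =
      (inner ℝ (f' xk) s : ℝ) + (inner ℝ (f' xk) (xk1 - xk) : ℝ) := by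
    rw [hs, inner_sub_right, inner_sub_right, inner_sub_right]
    ring
  have e4 : (inner ℝ (gk - f' xk) (xstar - xk1) : ℝ) =
      (inner ℝ gk s : ℝ) - (inner ℝ (f' xk) s : ℝ) := by
    rw [hs, inner_sub_left]
  rw [e4]
  have hLn : α * L * ‖xk1 - xk‖ ^ 2 ≤ ‖xk1 - xk‖ ^ 2 := by
    have hαL : α * L ≤ 1 := by
      rw [le_div_iff₀ hL] at hα1
      linarith
    nlinarith [sq_nonneg ‖xk1 - xk‖]
  have h23 : 2 * α * f xk1 ≤ 2 * α * f xstar - 2 * α * (inner ℝ (f' xk) s : ℝ)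
      + ‖xk1 - xk‖ ^ 2 := by
    have hcomb : f xk1 ≤ f xstar - (inner ℝ (f' xk) s : ℝ) + L / 2 * ‖xk1 - xk‖ ^ 2 := by
      have := hconvf
      rw [e3] at this
      linarith [hdesc]
    nlinarith [mul_le_mul_of_nonneg_left hcomb (by positivity : (0:ℝ) ≤ 2 * α), hLn]
  rw [e2] at hsub
  nlinarith [hsub, h23, e1]
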